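/- MacMahon's equidistribution theorem: the generating function of the statistic inv over S_n equals the generating function of the statistic maj over S_n, and both equal the q-factorial [n]_q [n-1]_q ⋯ [1]_q, where [k]_q = 1 + q + ⋯ + q^{k-1}. -/

import Mathlib

open Finset Equiv

namespace PaperStat

noncomputable section

attribute [local instance] Classical.propDecidable

/-- number of inversions of a permutation (pairs i<j with π i > π j) -/
def inv {n : ℕ} (π : Perm (Fin n)) : ℕ :=
  (univ.filter (fun p : Fin n × Fin n => p.1 < p.2 ∧ π p.2 < π p.1)).card

/-- pairs (i, i+1) forming an r-descent -/
def desSet {n : ℕ} (r : ℕ) (π : Perm (Fin n)) : Finset (Fin n × Fin n) :=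
  univ.filter (fun p : Fin n × Fin n =>
    (p.2 : ℕ) = (p.1 : ℕ) + 1 ∧ (π p.2 : ℕ) + r ≤ (π p.1 : ℕ))

/-- r-descent number -/
def rdes {n : ℕ} (r : ℕ) (π : Perm (Fin n)) : ℕ := (desSet r π).card

/-- r-major index: sum of (1-based) r-descent positions plus |rInv| -/
def rmaj {n : ℕ} (r : ℕ) (π : Perm (Fin n)) : ℕ :=
  (∑ p ∈ desSet r π, ((p.1 : ℕ) + 1)) +
  (univ.filter (fun p : Fin n × Fin n =>
      p.1 < p.2 ∧ (π p.2 : ℕ) < (π p.1 : ℕ) ∧ (π p.1 : ℕ) < (π p.2 : ℕ) + r)).card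

/-- descent number -/
def des {n : ℕ} (π : Perm (Fin n)) : ℕ := rdes 1 π

/-- major index -/
def maj {n : ℕ} (π : Perm (Fin n)) : ℕ := ∑ p ∈ desSet 1 π, ((p.1 : ℕ) + 1)

/-- i is a g-gap L-level excedance place (1-based: π_i ≥ i+g and π_i ≥ L) -/
def excp {n : ℕ} (g L : ℕ) (π : Perm (Fin n)) (i : Fin n) : Prop :=
  (i : ℕ) + g ≤ (π i : ℕ) ∧ L ≤ (π i : ℕ) + 1

/-- g-gap ℓ-level excedance number: positions i ≥ ℓ (1-based) with π_i ≥ i+g -/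
def gexc {n : ℕ} (g l : ℕ) (π : Perm (Fin n)) : ℕ :=
  (univ.filter (fun i : Fin n => l ≤ (i : ℕ) + 1 ∧ (i : ℕ) + g ≤ (π i : ℕ))).card

/-- inversions of the subword of π on positions satisfying P -/
def invOn {n : ℕ} (π : Perm (Fin n)) (P : Fin n → Prop) : ℕ :=
  (univ.filter (fun p : Fin n × Fin n =>
    P p.1 ∧ P p.2 ∧ p.1 < p.2 ∧ π p.2 < π p.1)).card

/-- g-gap L-level Denert statistic: Σ_{i ∈ gExcp}(i+g-1) (1-based) + inversions
of the excedance subword + inversions of the non-excedance subword -/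
def gden {n : ℕ} (g L : ℕ) (π : Perm (Fin n)) : ℕ :=
  (∑ i ∈ univ.filter (fun i : Fin n => excp g L π i), ((i : ℕ) + g)) +
  invOn π (fun i => excp g L π i) +
  invOn π (fun i => ¬ excp g L π i)


/-! ### insertion permutation -/

def insPerm {n : ℕ} (p b : Fin (n+1)) (σ : Perm (Fin n)) : Perm (Fin (n+1)) :=
  ((finSuccEquiv' p).trans (Equiv.optionCongr σ)).trans (finSuccEquiv' b).symm

@[simp] lemma insPerm_at {n : ℕ} (p b : Fin (n+1)) (σ : Perm (Fin n)) :
    insPerm p b σ p = b := by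
  simp [insPerm, finSuccEquiv'_at, finSuccEquiv'_symm_none]

@[simp] lemma insPerm_succAbove {n : ℕ} (p b : Fin (n+1)) (σ : Perm (Fin n)) (j : Fin n) :
    insPerm p b σ (p.succAbove j) = b.succAbove (σ j) := by
  simp [insPerm, finSuccEquiv'_succAbove, finSuccEquiv'_symm_some]

lemma insPerm_bij_pos {n : ℕ} (b : Fin (n+1)) :
    Function.Bijective (fun x : Fin (n+1) × Perm (Fin n) => insPerm x.1 b x.2) := by
  rw [Fintype.bijective_iff_injective_and_card]
  constructor
  · rintro ⟨p, σ⟩ ⟨p', σ'⟩ h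
    simp only at h
    have hp : p = p' := by
      have key : insPerm p' b σ' p = b := by rw [← h, insPerm_at]
      have key2 : insPerm p' b σ' p' = b := insPerm_at _ _ _
      exact (insPerm p' b σ').injective (key.trans key2.symm)
    subst hp
    have hσ : σ = σ' := by
      ext j
      have h2 := congrFun (congrArg (fun π : Perm (Fin (n+1)) => (π : Fin (n+1) → Fin (n+1))) h)
        (p.succAbove j)
      simp only [insPerm_succAbove] at h2
      exact congrArg Fin.val (Fin.succAbove_right_injective h2)
    rw [hσ]
  · simp [Fintype.card_perm, Nat.factorial_succ]

lemma insPerm_bij_val {n : ℕ} (p : Fin (n+1)) :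
    Function.Bijective (fun x : Fin (n+1) × Perm (Fin n) => insPerm p x.1 x.2) := by
  rw [Fintype.bijective_iff_injective_and_card]
  constructor
  · rintro ⟨b, σ⟩ ⟨b', σ'⟩ h
    simp only at h
    have hb : b = b' := by
      have := congrFun (congrArg (fun π : Perm (Fin (n+1)) => (π : Fin (n+1) → Fin (n+1))) h) p
      simpa using this
    subst hb
    have hσ : σ = σ' := by
      ext j
      have h2 := congrFun (congrArg (fun π : Perm (Fin (n+1)) => (π : Fin (n+1) → Fin (n+1))) h)
        (p.succAbove j)
      simp only [insPerm_succAbove] at h2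
      exact congrArg Fin.val (Fin.succAbove_right_injective h2)
    rw [hσ]
  · simp [Fintype.card_perm, Nat.factorial_succ]

/-! ### inv recursion -/

lemma card_filter_perm {n : ℕ} (σ : Perm (Fin n)) (P : Fin n → Prop)
    [DecidablePred P] [DecidablePred fun j => P (σ j)] :
    (univ.filter (fun j => P (σ j))).card = (univ.filter P).card := by
  apply Finset.card_bij (fun j _ => σ j)
  · intro a ha
    simp only [Finset.mem_filter, Finset.mem_univ, true_and] at ha ⊢
    exact ha
  · intro a _ b _ h
    exact σ.injective h
  · intro b hb
    refine ⟨σ⁻¹ b, ?_, by simp⟩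
    simp only [Finset.mem_filter, Finset.mem_univ, true_and] at hb ⊢
    simpa using hb

lemma filter_val_lt {n m : ℕ} [DecidablePred fun v : Fin n => (v : ℕ) < m] (hm : m ≤ n) :
    (univ.filter (fun v : Fin n => (v : ℕ) < m)).card = m := by
  have h : (Finset.range m).card = (univ.filter (fun v : Fin n => (v : ℕ) < m)).card := by
    apply Finset.card_bij
      (fun (a : ℕ) ha => (⟨a, lt_of_lt_of_le (Finset.mem_range.1 ha) hm⟩ : Fin n))
    · intro a ha
      simp only [Finset.mem_filter, Finset.mem_univ, true_and]
      exact Finset.mem_range.1 ha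
    · intro a ha b hb h
      exact congrArg Fin.val h
    · intro v hv
      simp only [Finset.mem_filter, Finset.mem_univ, true_and] at hv
      exact ⟨(v : ℕ), Finset.mem_range.2 hv, rfl⟩
  rw [Finset.card_range] at h
  exact h.symm

lemma inv_split {n : ℕ} (π : Perm (Fin (n+1))) :
    inv π = (univ.filter (fun j : Fin n => π j.succ < π 0)).card
      + (univ.filter (fun p : Fin n × Fin n => p.1 < p.2 ∧ π p.2.succ < π p.1.succ)).card := by
  rw [inv, ← Finset.card_filter_add_card_filter_not
    (p := fun p : Fin (n+1) × Fin (n+1) => p.1 = 0), Finset.filter_filter, Finset.filter_filter]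
  congr 1
  · symm
    apply Finset.card_bij (fun (j : Fin n) _ => ((0 : Fin (n+1)), j.succ))
    · intro j hj
      simp only [Finset.mem_filter, Finset.mem_univ, true_and] at hj ⊢
      exact ⟨⟨j.succ_pos, hj⟩, trivial⟩
    · intro a _ b _ h
      exact Fin.succ_injective _ (congrArg Prod.snd h)
    · rintro ⟨p1, p2⟩ hp
      simp only [Finset.mem_filter, Finset.mem_univ, true_and] at hp
      obtain ⟨⟨hlt, hinv⟩, h0⟩ := hp
      subst h0
      have h2 : p2 ≠ 0 := Fin.ne_of_gt hlt
      refine ⟨p2.pred h2, ?_, ?_⟩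
      · simp only [Finset.mem_filter, Finset.mem_univ, true_and, Fin.succ_pred]
        exact hinv
      · simp [Fin.succ_pred]
  · symm
    apply Finset.card_bij (fun (pr : Fin n × Fin n) _ => (pr.1.succ, pr.2.succ))
    · intro pr hpr
      simp only [Finset.mem_filter, Finset.mem_univ, true_and] at hpr ⊢
      exact ⟨⟨Fin.succ_lt_succ_iff.2 hpr.1, hpr.2⟩, Fin.succ_ne_zero _⟩
    · intro a _ b _ h
      have h1 := Fin.succ_injective _ (congrArg Prod.fst h)
      have h2 := Fin.succ_injective _ (congrArg Prod.snd h)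
      exact Prod.ext h1 h2
    · rintro ⟨p1, p2⟩ hp
      simp only [Finset.mem_filter, Finset.mem_univ, true_and] at hp
      obtain ⟨⟨hlt, hinv⟩, h0⟩ := hp
      have h2 : p2 ≠ 0 := Fin.ne_of_gt (lt_of_le_of_lt (Fin.zero_le _) hlt)
      refine ⟨(p1.pred h0, p2.pred h2), ?_, ?_⟩
      · simp only [Finset.mem_filter, Finset.mem_univ, true_and, Fin.succ_pred]
        refine ⟨?_, hinv⟩
        rw [← Fin.succ_lt_succ_iff, Fin.succ_pred, Fin.succ_pred]
        exact hlt
      · simp [Fin.succ_pred]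

lemma inv_insPerm {n : ℕ} (k : Fin (n+1)) (σ : Perm (Fin n)) :
    inv (insPerm 0 k σ) = (k : ℕ) + inv σ := by
  have hs : ∀ j : Fin n, insPerm 0 k σ j.succ = k.succAbove (σ j) := by
    intro j
    rw [← Fin.zero_succAbove j, insPerm_succAbove]
  rw [inv_split]
  congr 1
  · have h1 : (univ.filter (fun j : Fin n => insPerm 0 k σ j.succ < insPerm 0 k σ 0)).card
        = (univ.filter (fun j : Fin n => (σ j : ℕ) < (k : ℕ))).card := by
      congr 1
      apply Finset.filter_congr
      intro j _
      rw [hs j, insPerm_at]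
      rw [Fin.succAbove_lt_iff_castSucc_lt]
      simp [Fin.lt_def]
    rw [h1, card_filter_perm σ (fun v => (v : ℕ) < (k : ℕ)), filter_val_lt (Fin.is_le k)]
  · rw [inv]
    congr 1
    apply Finset.filter_congr
    intro pr _
    rw [hs pr.1, hs pr.2, Fin.succAbove_lt_succAbove_iff]

lemma sum_inv_eq {R : Type*} [CommSemiring R] (q : R) :
    ∀ n : ℕ, (∑ π : Perm (Fin n), q ^ inv π)
      = ∏ k ∈ Finset.range n, ∑ j ∈ Finset.range (k + 1), q ^ j
  | 0 => by
    haveI : Subsingleton (Perm (Fin 0)) := ⟨fun a b => Equiv.ext (fun x => x.elim0)⟩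
    rw [Fintype.sum_subsingleton _ (1 : Perm (Fin 0))]
    simp [inv]
  | (n+1) => by
    rw [Finset.prod_range_succ, ← sum_inv_eq q n]
    have hb := Fintype.sum_bijective _ (insPerm_bij_val (n := n) 0)
      (fun x : Fin (n+1) × Perm (Fin n) => q ^ inv (insPerm 0 x.1 x.2))
      (fun π => q ^ inv π) (fun x => rfl)
    rw [← hb, Fintype.sum_prod_type]
    calc ∑ k : Fin (n+1), ∑ σ : Perm (Fin n), q ^ inv (insPerm 0 k σ)
        = ∑ k : Fin (n+1), ∑ σ : Perm (Fin n), q ^ (k : ℕ) * q ^ inv σ := by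
          apply Finset.sum_congr rfl; intro k _
          apply Finset.sum_congr rfl; intro σ _
          rw [inv_insPerm, pow_add]
      _ = (∑ k : Fin (n+1), q ^ (k : ℕ)) * (∑ σ : Perm (Fin n), q ^ inv σ) := by
          rw [← Finset.sum_mul_sum]
      _ = (∑ σ : Perm (Fin n), q ^ inv σ) * (∑ j ∈ Finset.range (n+1), q ^ j) := by
          rw [Fin.sum_univ_eq_sum_range (fun j => q ^ j) (n+1), mul_comm]

def majN (m : ℕ) (w : ℕ → ℕ) : ℕ :=
  ∑ j ∈ Finset.range (m - 1), if w (j+1) < w j then j + 1 else 0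

def insWord (p v : ℕ) (w : ℕ → ℕ) : ℕ → ℕ :=
  fun i => if i < p then w i else if i = p then v else w (i - 1)

def dge (m p : ℕ) (w : ℕ → ℕ) : ℕ :=
  ((Finset.range (m-1)).filter (fun j => p ≤ j ∧ w (j+1) < w j)).card

def delta (m p : ℕ) (w : ℕ → ℕ) : ℕ :=
  if p = m then 0
  else if 0 < p ∧ w p < w (p-1) then 1 + dge m p w
  else p + 1 + dge m p w

lemma insWord_lt {p v : ℕ} {w : ℕ → ℕ} {i : ℕ} (h : i < p) : insWord p v w i = w i :=
  if_pos h

lemma insWord_self {p v : ℕ} {w : ℕ → ℕ} : insWord p v w p = v := by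
  simp [insWord]

lemma insWord_gt {p v : ℕ} {w : ℕ → ℕ} {i : ℕ} (h : p < i) : insWord p v w i = w (i - 1) := by
  have h1 : ¬ i < p := by omega
  have h2 : i ≠ p := by omega
  simp [insWord, h1, h2]

lemma majN_congr {m : ℕ} {f g : ℕ → ℕ} (h : ∀ i < m, f i = g i) : majN m f = majN m g := by
  apply Finset.sum_congr rfl
  intro j hj
  rw [Finset.mem_range] at hj
  rw [h j (by omega), h (j+1) (by omega)]

lemma dge_eq_sum (m p : ℕ) (w : ℕ → ℕ) (hpm : p ≤ m - 1) :
    dge m p w = ∑ j ∈ Finset.Ico p (m-1), (if w (j+1) < w j then 1 else 0) := by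
  rw [dge, Finset.card_filter, Finset.range_eq_Ico,
    ← Finset.sum_Ico_consecutive _ (Nat.zero_le p) hpm]
  have h1 : ∀ j ∈ Finset.Ico 0 p, (if p ≤ j ∧ w (j+1) < w j then 1 else 0) = 0 := by
    intro j hj
    rw [Finset.mem_Ico] at hj
    have : ¬ (p ≤ j ∧ w (j+1) < w j) := by
      intro hc; omega
    rw [if_neg this]
  rw [Finset.sum_congr rfl h1, Finset.sum_const_zero, zero_add]
  apply Finset.sum_congr rfl
  intro j hj
  rw [Finset.mem_Ico] at hj
  by_cases hc : w (j+1) < w j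
  · rw [if_pos ⟨hj.1, hc⟩, if_pos hc]
  · rw [if_neg (by tauto), if_neg hc]

lemma majN_insWord (m p : ℕ) (w : ℕ → ℕ) (hp : p ≤ m) (hw : ∀ i < m, w i < m) :
    majN (m+1) (insWord p m w) = majN m w + delta m p w := by
  set u := insWord p m w with hu
  by_cases hpm : p = m
  · -- insertion at the end
    subst hpm
    rw [delta, if_pos rfl, Nat.add_zero, majN, Nat.add_sub_cancel]
    cases p with
    | zero => simp [majN]
    | succ m' =>
      rw [Finset.sum_range_succ]
      have h1 : u m' = w m' := insWord_lt (by omega)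
      have h2 : u (m'+1) = m'+1 := by rw [hu]; exact insWord_self
      have hF : (if u (m'+1) < u m' then m'+1 else 0) = 0 := by
        rw [h1, h2, if_neg (by have := hw m' (by omega); omega)]
      rw [hF, Nat.add_zero, majN, Nat.add_sub_cancel]
      apply Finset.sum_congr rfl
      intro j hj
      rw [Finset.mem_range] at hj
      rw [hu, insWord_lt (by omega : j < m'+1), insWord_lt (by omega : j + 1 < m'+1)]
  · have hplt : p < m := lt_of_le_of_ne hp hpm
    have hm1 : 1 ≤ m := by omega
    set O : ℕ → ℕ := fun j => if w (j+1) < w j then j + 1 else 0 with hO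
    set F : ℕ → ℕ := fun j => if u (j+1) < u j then j + 1 else 0 with hF
    set c : ℕ := if 0 < p ∧ w p < w (p-1) then p else 0 with hc
    have hLHS : majN (m+1) u = ∑ j ∈ Finset.range m, F j := by
      rw [majN, Nat.add_sub_cancel]
    have h2 : ∑ j ∈ Finset.range m, F j
        = (∑ j ∈ Finset.range p, F j) + ∑ j ∈ Finset.Ico p m, F j := by
      rw [Finset.range_eq_Ico, ← Finset.sum_Ico_consecutive _ (Nat.zero_le p) (le_of_lt hplt), Finset.range_eq_Ico]
    have h3 : ∑ j ∈ Finset.Ico p m, F j = F p + ∑ j ∈ Finset.Ico (p+1) m, F j :=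
      Finset.sum_eq_sum_Ico_succ_bot hplt F
    have h4 : F p = p + 1 := by
      rw [hF]
      simp only
      have e1 : u (p+1) = w p := by rw [hu, insWord_gt (by omega)]; norm_num
      have e2 : u p = m := by rw [hu]; exact insWord_self
      rw [e1, e2, if_pos (hw p hplt)]
    have h5 : ∑ j ∈ Finset.Ico (p+1) m, F j
        = (∑ j ∈ Finset.Ico p (m-1), O j) + dge m p w := by
      rw [dge_eq_sum m p w (by omega), ← Finset.sum_add_distrib,
        Finset.sum_Ico_eq_sum_range, Finset.sum_Ico_eq_sum_range]
      have he : m - (p+1) = m - 1 - p := by omega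
      rw [he]
      apply Finset.sum_congr rfl
      intro i _
      have e1 : u (p+1+i) = w (p+i) := by
        rw [hu, insWord_gt (by omega)]
        congr 1
        omega
      have e2 : u (p+1+i+1) = w (p+i+1) := by
        rw [hu, insWord_gt (by omega)]
        congr 1
        omega
      rw [hF, hO]
      simp only
      rw [e1, e2]
      split_ifs with h
      · omega
      · omega
    have h7 : (∑ j ∈ Finset.range p, F j) + c = ∑ j ∈ Finset.range p, O j := by
      cases p with
      | zero => simp [hc]
      | succ p' =>
        rw [Finset.sum_range_succ, Finset.sum_range_succ]
        have e0 : ∑ j ∈ Finset.range p', F j = ∑ j ∈ Finset.range p', O j := by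
          apply Finset.sum_congr rfl
          intro j hj
          rw [Finset.mem_range] at hj
          rw [hF, hO]
          simp only
          rw [hu, insWord_lt (by omega : j < p'+1), insWord_lt (by omega : j+1 < p'+1)]
        have e1 : F p' = 0 := by
          rw [hF]
          simp only
          have e2 : u (p'+1) = m := by rw [hu]; exact insWord_self
          have e3 : u p' = w p' := insWord_lt (by omega)
          rw [e2, e3, if_neg (by have := hw p' (by omega); omega)]
        have e4 : c = O p' := by
          rw [hc, hO]
          simp only
          have : (0 < p' + 1 ∧ w (p'+1) < w (p'+1-1)) ↔ w (p'+1) < w p' := by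
            constructor
            · rintro ⟨-, h⟩; simpa using h
            · intro h; exact ⟨Nat.succ_pos _, by simpa using h⟩
          split_ifs with ha hb hb
          · omega
          · rw [this] at ha; exact absurd ha hb
          · rw [this] at ha; exact absurd hb ha
          · rfl
        rw [e0, e1, e4]
        omega
    have h8 : majN m w = (∑ j ∈ Finset.range p, O j) + ∑ j ∈ Finset.Ico p (m-1), O j := by
      rw [majN, Finset.range_eq_Ico,
        ← Finset.sum_Ico_consecutive _ (Nat.zero_le p) (by omega : p ≤ m - 1), Finset.range_eq_Ico]
    have h9 : delta m p w + c = p + 1 + dge m p w := by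
      rw [delta, if_neg hpm, hc]
      split_ifs with ha <;> omega
    omega

/-! ### delta is a bijection on range (m+1) -/

lemma dge_le (m p : ℕ) (w : ℕ → ℕ) : dge m p w ≤ m - 1 := by
  calc dge m p w ≤ (Finset.range (m-1)).card := Finset.card_filter_le _ _
    _ = m - 1 := Finset.card_range _

lemma dge_le_sub (m p : ℕ) (w : ℕ → ℕ) (hp : p ≤ m - 1) : dge m p w ≤ m - 1 - p := by
  rw [dge]
  calc ((Finset.range (m-1)).filter (fun j => p ≤ j ∧ w (j+1) < w j)).card
      ≤ (Finset.Ico p (m-1)).card := by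
        apply Finset.card_le_card
        intro j hj
        simp only [Finset.mem_filter, Finset.mem_range] at hj
        rw [Finset.mem_Ico]
        exact ⟨hj.2.1, hj.1⟩
    _ = m - 1 - p := Nat.card_Ico _ _

/-- strict decrease across a descent -/
lemma dge_desc {m p p' : ℕ} (w : ℕ → ℕ) (h : p < p') (hm : p' < m)
    (hp0 : 0 < p') (hd : w p' < w (p'-1)) : dge m p' w + 1 ≤ dge m p w := by
  set x := p' - 1 with hx
  have hxmem : x ∈ (Finset.range (m-1)).filter (fun j => p ≤ j ∧ w (j+1) < w j) := by
    simp only [Finset.mem_filter, Finset.mem_range]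
    have hx1 : x + 1 = p' := by omega
    refine ⟨by omega, by omega, ?_⟩
    rw [hx1]
    exact hd
  have hxnot : x ∉ (Finset.range (m-1)).filter (fun j => p' ≤ j ∧ w (j+1) < w j) := by
    simp only [Finset.mem_filter, Finset.mem_range]
    rintro ⟨-, h2, -⟩
    omega
  have hsub : insert x ((Finset.range (m-1)).filter (fun j => p' ≤ j ∧ w (j+1) < w j))
      ⊆ (Finset.range (m-1)).filter (fun j => p ≤ j ∧ w (j+1) < w j) := by
    intro j hj
    rw [Finset.mem_insert] at hj
    rcases hj with rfl | hj
    · exact hxmem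
    · simp only [Finset.mem_filter, Finset.mem_range] at hj ⊢
      exact ⟨hj.1, by omega, hj.2.2⟩
  have := Finset.card_le_card hsub
  rwa [Finset.card_insert_of_notMem hxnot] at this

lemma dge_zero_le (m p : ℕ) (w : ℕ → ℕ) : dge m 0 w ≤ p + dge m p w := by
  have hsub : (Finset.range (m-1)).filter (fun j => 0 ≤ j ∧ w (j+1) < w j)
      ⊆ ((Finset.range (m-1)).filter (fun j => p ≤ j ∧ w (j+1) < w j)) ∪ Finset.range p := by
    intro j hj
    simp only [Finset.mem_filter, Finset.mem_range] at hj
    rw [Finset.mem_union]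
    by_cases hc : p ≤ j
    · left; simp only [Finset.mem_filter, Finset.mem_range]; exact ⟨hj.1, hc, hj.2.2⟩
    · right; rw [Finset.mem_range]; omega
  calc dge m 0 w ≤ _ := Finset.card_le_card hsub
    _ ≤ dge m p w + p := by
        refine le_trans (Finset.card_union_le _ _) ?_
        rw [dge, Finset.card_range]
    _ = p + dge m p w := by omega

lemma dge_nondesc {m p p' : ℕ} (w : ℕ → ℕ) (h : p < p')
    (hd : ¬ w p' < w (p'-1)) : dge m p w ≤ dge m p' w + (p' - 1 - p) := by
  have hsub : (Finset.range (m-1)).filter (fun j => p ≤ j ∧ w (j+1) < w j)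
      ⊆ ((Finset.range (m-1)).filter (fun j => p' ≤ j ∧ w (j+1) < w j))
        ∪ Finset.Ico p (p'-1) := by
    intro j hj
    simp only [Finset.mem_filter, Finset.mem_range] at hj
    rw [Finset.mem_union]
    by_cases hc : p' ≤ j
    · left; simp only [Finset.mem_filter, Finset.mem_range]; exact ⟨hj.1, hc, hj.2.2⟩
    · right
      rw [Finset.mem_Ico]
      refine ⟨hj.2.1, ?_⟩
      have hne : j ≠ p' - 1 := by
        intro hx
        apply hd
        have : j + 1 = p' := by omega
        rw [← this]
        simpa using hj.2.2
      omega
  calc dge m p w ≤ _ := Finset.card_le_card hsub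
    _ ≤ dge m p' w + (p' - 1 - p) := by
        refine le_trans (Finset.card_union_le _ _) ?_
        rw [dge, Nat.card_Ico]

lemma delta_le {m p : ℕ} (w : ℕ → ℕ) (hp : p ≤ m) : delta m p w ≤ m := by
  rw [delta]
  split_ifs with h1 h2
  · omega
  · have := dge_le m p w
    omega
  · by_cases hpm : p = m
    · omega
    · have := dge_le_sub m p w (by omega)
      omega

lemma delta_lt_ne {m : ℕ} (w : ℕ → ℕ) {p p' : ℕ} (h : p < p') (h' : p' ≤ m) :
    delta m p w ≠ delta m p' w := by
  have hpm : p ≠ m := by omega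
  by_cases hp'm : p' = m
  · rw [delta, delta, if_pos hp'm, if_neg hpm]
    split_ifs <;> omega
  · have hp'lt : p' < m := by omega
    have hp'pos : 0 < p' := by omega
    rw [delta, delta, if_neg hpm, if_neg hp'm]
    by_cases d1 : 0 < p ∧ w p < w (p-1) <;> by_cases d2 : 0 < p' ∧ w p' < w (p'-1)
    · rw [if_pos d1, if_pos d2]
      have := dge_desc w h hp'lt hp'pos d2.2
      omega
    · rw [if_pos d1, if_neg d2]
      have hnd : ¬ w p' < w (p'-1) := by tauto
      -- delta p = 1 + dge p ≤ dge 0;  delta p' = p'+1+dge p' ≥ 1 + dge 0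
      have ha : dge m p w + 1 ≤ dge m 0 w := dge_desc w d1.1 (by omega) d1.1 d1.2
      have hb : dge m 0 w ≤ p' + dge m p' w := dge_zero_le m p' w
      omega
    · rw [if_neg d1, if_pos d2]
      have ha : dge m p' w + 1 ≤ dge m 0 w := dge_desc w hp'pos hp'lt hp'pos d2.2
      have hb : dge m 0 w ≤ p + dge m p w := dge_zero_le m p w
      omega
    · rw [if_neg d1, if_neg d2]
      have hnd : ¬ w p' < w (p'-1) := by tauto
      have := dge_nondesc (m := m) w h hnd
      omega

lemma sum_delta {R : Type*} [CommSemiring R] (q : R) (m : ℕ) (w : ℕ → ℕ) :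
    ∑ p ∈ Finset.range (m+1), q ^ delta m p w = ∑ j ∈ Finset.range (m+1), q ^ j := by
  have hinj : ∀ p ∈ Finset.range (m+1), ∀ p' ∈ Finset.range (m+1),
      delta m p w = delta m p' w → p = p' := by
    intro p hp p' hp' he
    rw [Finset.mem_range] at hp hp'
    rcases lt_trichotomy p p' with hlt | heq | hgt
    · exact absurd he (delta_lt_ne w hlt (by omega))
    · exact heq
    · exact absurd he.symm (delta_lt_ne w hgt (by omega))
  have himg : (Finset.range (m+1)).image (fun p => delta m p w) = Finset.range (m+1) := by
    apply Finset.eq_of_subset_of_card_le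
    · intro x hx
      rw [Finset.mem_image] at hx
      obtain ⟨p, hp, rfl⟩ := hx
      rw [Finset.mem_range] at hp ⊢
      have := delta_le w (show p ≤ m by omega)
      omega
    · rw [Finset.card_image_of_injOn hinj]
  calc ∑ p ∈ Finset.range (m+1), q ^ delta m p w
      = ∑ j ∈ (Finset.range (m+1)).image (fun p => delta m p w), q ^ j :=
        (Finset.sum_image hinj).symm
    _ = ∑ j ∈ Finset.range (m+1), q ^ j := by rw [himg]


/-! ### glue between Fin-level maj and ℕ-level words -/

def wordOf {m : ℕ} (π : Perm (Fin m)) : ℕ → ℕ :=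
  fun i => if h : i < m then (π ⟨i, h⟩ : ℕ) else m

lemma wordOf_lt {m : ℕ} (π : Perm (Fin m)) {i : ℕ} (h : i < m) :
    wordOf π i = π ⟨i, h⟩ := dif_pos h

lemma maj_eq_majN {m : ℕ} (π : Perm (Fin m)) : maj π = majN m (wordOf π) := by
  rw [maj, majN,
    ← Finset.sum_filter (fun j => wordOf π (j+1) < wordOf π j) (fun j => j + 1)]
  apply Finset.sum_bij (fun (pr : Fin m × Fin m) _ => (pr.1 : ℕ))
  · rintro ⟨a, b⟩ hab
    simp only [desSet, Finset.mem_filter, Finset.mem_univ, true_and] at hab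
    obtain ⟨hb, hd⟩ := hab
    have hbm : (b : ℕ) < m := b.isLt
    have ham : (a : ℕ) < m - 1 := by omega
    simp only [Finset.mem_filter, Finset.mem_range]
    refine ⟨ham, ?_⟩
    rw [wordOf_lt _ (show (a:ℕ) + 1 < m by omega), wordOf_lt _ (show (a:ℕ) < m by omega)]
    have e1 : (⟨(a:ℕ) + 1, by omega⟩ : Fin m) = b := Fin.ext (by simp [hb])
    have e2 : (⟨(a:ℕ), by omega⟩ : Fin m) = a := Fin.ext rfl
    rw [e1, e2]
    omega
  · rintro ⟨a, b⟩ hab ⟨a', b'⟩ hab' h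
    simp only [desSet, Finset.mem_filter, Finset.mem_univ, true_and] at hab hab'
    have ha : a = a' := Fin.ext h
    have hb : b = b' := Fin.ext (by omega)
    rw [ha, hb]
  · intro j hj
    simp only [Finset.mem_filter, Finset.mem_range] at hj
    obtain ⟨hjm, hcond⟩ := hj
    rw [wordOf_lt _ (show j + 1 < m by omega), wordOf_lt _ (show j < m by omega)] at hcond
    refine ⟨(⟨j, by omega⟩, ⟨j+1, by omega⟩), ?_, rfl⟩
    simp only [desSet, Finset.mem_filter, Finset.mem_univ, true_and]
    exact hcond
  · intro pr _
    rfl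

lemma wordOf_insPerm {n : ℕ} (p : Fin (n+1)) (σ : Perm (Fin n)) :
    ∀ i < n+1, wordOf (insPerm p (Fin.last n) σ) i = insWord (p : ℕ) n (wordOf σ) i := by
  intro i hi
  have hpn : (p : ℕ) ≤ n := Fin.is_le p
  rcases lt_trichotomy i (p : ℕ) with hlt | heq | hgt
  · have hin : i < n := by omega
    set j : Fin n := ⟨i, hin⟩ with hj
    have hcs : Fin.castSucc j < p := by
      rw [Fin.lt_def]
      simpa using hlt
    have hsa : p.succAbove j = ⟨i, hi⟩ := by
      rw [Fin.succAbove_of_castSucc_lt p j hcs]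
      exact Fin.ext rfl
    rw [wordOf_lt _ hi, insWord_lt hlt, wordOf_lt _ hin, ← hsa, insPerm_succAbove,
      Fin.succAbove_last]
    simp [hj]
  · have hip : (⟨i, hi⟩ : Fin (n+1)) = p := Fin.ext heq
    rw [wordOf_lt _ hi, hip, insPerm_at]
    have : insWord (p : ℕ) n (wordOf σ) i = n := by rw [heq]; exact insWord_self
    rw [this]
    simp
  · have hi1 : i - 1 < n := by omega
    set j : Fin n := ⟨i - 1, hi1⟩ with hj
    have hle : p ≤ Fin.castSucc j := by
      rw [Fin.le_def]
      simp only [Fin.coe_castSucc, hj, Fin.val_mk]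
      omega
    have hsa : p.succAbove j = ⟨i, hi⟩ := by
      rw [Fin.succAbove_of_le_castSucc p j hle]
      exact Fin.ext (by simp [Fin.val_succ, hj]; omega)
    rw [wordOf_lt _ hi, insWord_gt hgt, wordOf_lt _ hi1, ← hsa, insPerm_succAbove,
      Fin.succAbove_last]
    simp [hj]

lemma maj_insPerm {n : ℕ} (p : Fin (n+1)) (σ : Perm (Fin n)) :
    maj (insPerm p (Fin.last n) σ) = maj σ + delta n (p : ℕ) (wordOf σ) := by
  rw [maj_eq_majN, maj_eq_majN, majN_congr (m := n+1) (wordOf_insPerm p σ)]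
  exact majN_insWord n (p : ℕ) (wordOf σ) (Fin.is_le p)
    (fun i hi => by rw [wordOf_lt _ hi]; exact (σ ⟨i, hi⟩).isLt)

lemma sum_maj_eq {R : Type*} [CommSemiring R] (q : R) :
    ∀ n : ℕ, (∑ π : Perm (Fin n), q ^ maj π)
      = ∏ k ∈ Finset.range n, ∑ j ∈ Finset.range (k + 1), q ^ j
  | 0 => by
    haveI : Subsingleton (Perm (Fin 0)) := ⟨fun a b => Equiv.ext (fun x => x.elim0)⟩
    rw [Fintype.sum_subsingleton _ (1 : Perm (Fin 0))]
    simp [maj, desSet]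
  | (n+1) => by
    rw [Finset.prod_range_succ, ← sum_maj_eq q n]
    have hb := Fintype.sum_bijective _ (insPerm_bij_pos (n := n) (Fin.last n))
      (fun x : Fin (n+1) × Perm (Fin n) => q ^ maj (insPerm x.1 (Fin.last n) x.2))
      (fun π => q ^ maj π) (fun x => rfl)
    rw [← hb, Fintype.sum_prod_type]
    calc ∑ p : Fin (n+1), ∑ σ : Perm (Fin n), q ^ maj (insPerm p (Fin.last n) σ)
        = ∑ p : Fin (n+1), ∑ σ : Perm (Fin n), q ^ maj σ * q ^ delta n (p : ℕ) (wordOf σ) := by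
          apply Finset.sum_congr rfl; intro p _
          apply Finset.sum_congr rfl; intro σ _
          rw [maj_insPerm, pow_add]
      _ = ∑ σ : Perm (Fin n), ∑ p : Fin (n+1), q ^ maj σ * q ^ delta n (p : ℕ) (wordOf σ) :=
          Finset.sum_comm
      _ = ∑ σ : Perm (Fin n), q ^ maj σ * ∑ j ∈ Finset.range (n+1), q ^ j := by
          apply Finset.sum_congr rfl; intro σ _
          rw [← Finset.mul_sum]
          congr 1
          rw [Fin.sum_univ_eq_sum_range (fun p => q ^ delta n p (wordOf σ)) (n+1)]
          exact sum_delta q n (wordOf σ)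
      _ = (∑ σ : Perm (Fin n), q ^ maj σ) * ∑ j ∈ Finset.range (n+1), q ^ j := by
          rw [← Finset.sum_mul]

/-- MacMahon's equidistribution theorem. -/
theorem macmahon (n : ℕ) (R : Type*) [CommSemiring R] (q : R) :
    (∑ π : Perm (Fin n), q ^ inv π) = (∑ π : Perm (Fin n), q ^ maj π) ∧
    (∑ π : Perm (Fin n), q ^ inv π) =
      ∏ k ∈ Finset.range n, ∑ j ∈ Finset.range (k + 1), q ^ j := by
  refine ⟨?_, sum_inv_eq q n⟩
  rw [sum_inv_eq q n, sum_maj_eq q n]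

end

end PaperStat
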